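/- arXiv:2505.13727 — 5 statements merged into one kernel-verified Lean document; each statement's English description precedes it below -/
import Mathlib

section
/- Let g ≥ 1 be an integer and let τ be a symmetric g×g complex matrix whose imaginary part is positive definite. Then for all z1, z2 ∈ ℂ^g the Riemann theta relation holds: θ[0,0](z1 + z2, τ) · θ[0,0](z1 − z2, τ) = Σ_{a ∈ {0,1/2}^g} θ[a,0](2z1, 2τ) · θ[a,0](2z2, 2τ), where the sum runs over all 2^g vectors a with entries in {0, 1/2}. -/
open scoped BigOperators

/-- The theta function with characteristic `[a, b]`:
`θ[a,b](z,τ) = Σ_{n ∈ ℤ^g} exp(πi·(n+a)ᵀτ(n+a) + 2πi·(n+a)ᵀ(z+b))`. -/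
noncomputable def theta (g : ℕ) (τ : Matrix (Fin g) (Fin g) ℂ) (a b : Fin g → ℚ)
    (z : Fin g → ℂ) : ℂ :=
  ∑' n : Fin g → ℤ,
    Complex.exp ((Real.pi : ℂ) * Complex.I *
        dotProduct (fun i => (n i : ℂ) + (a i : ℂ))
          (τ.mulVec fun i => (n i : ℂ) + (a i : ℂ)) +
      2 * (Real.pi : ℂ) * Complex.I *
        dotProduct (fun i => (n i : ℂ) + (a i : ℂ)) fun i => z i + (b i : ℂ))

namespace RT

lemma sum_exp_abs : Summable (fun k : ℤ => Real.exp (-|(k:ℝ)|)) := by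
  have hgeo : Summable (fun n : ℕ => Real.exp (-1) ^ n) :=
    summable_geometric_of_lt_one (Real.exp_nonneg _) (by rw [Real.exp_lt_one_iff]; norm_num)
  apply Summable.of_nat_of_neg
  · refine hgeo.congr (fun n => ?_)
    rw [← Real.exp_nat_mul]
    congr 1
    rw [_root_.abs_of_nonneg (by positivity : (0:ℝ) ≤ ((n:ℤ):ℝ))]
    push_cast; ring
  · refine hgeo.congr (fun n => ?_)
    rw [← Real.exp_nat_mul]
    congr 1
    push_cast
    rw [abs_neg, _root_.abs_of_nonneg (by positivity : (0:ℝ) ≤ (n:ℝ))]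
    ring

lemma sum_1d (c C t : ℝ) (hc : 0 < c) :
    Summable (fun k : ℤ => Real.exp (-c * ((k:ℝ)+t)^2 + C * |(k:ℝ)+t|)) := by
  refine Summable.of_nonneg_of_le (fun k => Real.exp_nonneg _) (fun k => ?_)
    ((sum_exp_abs.mul_left (Real.exp ((C+1)^2/(4*c) + |t|))))
  rw [← Real.exp_add]
  apply Real.exp_le_exp.mpr
  set s := |(k:ℝ)+t| with hs
  have h1 : |(k:ℝ)| ≤ s + |t| := by
    calc |(k:ℝ)| = |((k:ℝ)+t) + (-t)| := by ring_nf
    _ ≤ s + |(-t)| := abs_add_le _ _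
    _ = s + |t| := by rw [abs_neg]
  have h3 : ((k:ℝ)+t)^2 = s^2 := (_root_.sq_abs _).symm
  have hA : 4*c*((C+1)^2/(4*c)) = (C+1)^2 := by field_simp
  have key : -c * s^2 + C*s ≤ (C+1)^2/(4*c) - s := by
    nlinarith [sq_nonneg (2*c*s - (C+1)), hc]
  rw [h3]
  linarith

lemma sum_pi : ∀ (g : ℕ) (G : Fin g → ℤ → ℝ), (∀ i k, 0 ≤ G i k) → (∀ i, Summable (G i)) →
    Summable (fun n : Fin g → ℤ => ∏ i, G i (n i)) := by
  intro g
  induction g with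
  | zero =>
    intro G _ _
    exact summable_of_finite_support (Set.toFinite _)
  | succ g IH =>
    intro G h0 hs
    set F : (Fin g → ℤ) → ℝ := fun n => ∏ i, G i.succ (n i) with hF
    have hIH : Summable F := IH (fun i => G i.succ) (fun i k => h0 _ _) (fun i => hs _)
    have hf' : 0 ≤ G 0 := fun k => h0 0 k
    have hg' : 0 ≤ F := fun p => Finset.prod_nonneg (fun i _ => h0 _ _)
    have h2 : Summable (fun p : ℤ × (Fin g → ℤ) => G 0 p.1 * F p.2) :=
      Summable.mul_of_nonneg (hs 0) hIH hf' hg'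
    have h3 := (Fin.consEquiv fun _ => ℤ).symm.summable_iff.mpr h2
    refine h3.congr (fun n => ?_)
    simp only [Function.comp, Fin.consEquiv, Equiv.coe_fn_symm_mk, Fin.prod_univ_succ, hF]
    rfl

lemma posdef_bound {g : ℕ} (Y : Matrix (Fin g) (Fin g) ℝ) (hY : Y.PosDef) :
    ∃ c > 0, ∀ x : Fin g → ℝ, c * ∑ i, (x i)^2 ≤ dotProduct x (Y.mulVec x) := by
  rcases Nat.eq_zero_or_pos g with hg | hg
  · subst hg
    exact ⟨1, one_pos, fun x => by simp [dotProduct]⟩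
  have : Nonempty (Fin g) := ⟨⟨0, hg⟩⟩
  set f : EuclideanSpace ℝ (Fin g) → ℝ := fun x => dotProduct (x : Fin g → ℝ) (Y.mulVec x)
    with hf
  have hcont : Continuous f := by
    simp only [hf, dotProduct, Matrix.mulVec]
    fun_prop
  have hne : (Metric.sphere (0 : EuclideanSpace ℝ (Fin g)) 1).Nonempty := by
    refine ⟨EuclideanSpace.single ⟨0, hg⟩ 1, ?_⟩
    simp [EuclideanSpace.norm_single]
  obtain ⟨x0, hx0mem, hx0min⟩ :=
    (isCompact_sphere (0 : EuclideanSpace ℝ (Fin g)) 1).exists_isMinOn hne hcont.continuousOn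
  have hx0norm : ‖x0‖ = 1 := by simpa using hx0mem
  have hx0ne : x0 ≠ 0 := by intro h; rw [h] at hx0norm; simp at hx0norm
  have hc : 0 < f x0 := by
    have := hY.dotProduct_mulVec_pos (x := (x0 : Fin g → ℝ)) (by simpa using hx0ne)
    simpa [hf] using this
  refine ⟨f x0, hc, fun x => ?_⟩
  rcases eq_or_ne x 0 with rfl | hx
  · simp [dotProduct]
  · set u : EuclideanSpace ℝ (Fin g) := (WithLp.equiv 2 (Fin g → ℝ)).symm x with hu
    have hune : u ≠ 0 := by
      simpa [hu] using hx
    have hr : 0 < ‖u‖ := norm_pos_iff.mpr hune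
    set r := ‖u‖ with hrdef
    have hmem : r⁻¹ • u ∈ Metric.sphere (0 : EuclideanSpace ℝ (Fin g)) 1 := by
      simp [norm_smul, _root_.abs_of_pos hr, ← hrdef, inv_mul_cancel₀ hr.ne']
    have hmin := hx0min hmem
    have hfval : f (r⁻¹ • u) = r⁻¹ * (r⁻¹ * dotProduct x (Y.mulVec x)) := by
      have : ((r⁻¹ • u : EuclideanSpace ℝ (Fin g)) : Fin g → ℝ) = r⁻¹ • x := rfl
      rw [hf]
      simp only [this, Matrix.mulVec_smul, dotProduct_smul, smul_dotProduct]
      simp [smul_eq_mul, mul_assoc]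
    have hr2 : r^2 = ∑ i, (x i)^2 := by
      rw [hrdef, EuclideanSpace.norm_eq]
      rw [Real.sq_sqrt (by positivity)]
      simp [hu, _root_.sq_abs]
    have : f x0 ≤ r⁻¹ * (r⁻¹ * dotProduct x (Y.mulVec x)) := by
      rw [← hfval]; exact hmin
    have h2 : f x0 * r^2 ≤ dotProduct x (Y.mulVec x) := by
      have hr2pos : (0:ℝ) < r^2 := by positivity
      have heq : r⁻¹ * (r⁻¹ * dotProduct x (Y.mulVec x)) * r^2
          = dotProduct x (Y.mulVec x) := by field_simp
      nlinarith [mul_le_mul_of_nonneg_right this hr2pos.le]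
    rw [← hr2]
    exact h2

variable {g : ℕ}

noncomputable def E (τ : Matrix (Fin g) (Fin g) ℂ) (a : Fin g → ℚ) (w : Fin g → ℂ)
    (n : Fin g → ℤ) : ℂ :=
  Complex.exp ((Real.pi : ℂ) * Complex.I *
      dotProduct (fun i => (n i : ℂ) + (a i : ℂ))
        (τ.mulVec fun i => (n i : ℂ) + (a i : ℂ)) +
    2 * (Real.pi : ℂ) * Complex.I *
      dotProduct (fun i => (n i : ℂ) + (a i : ℂ)) w)

lemma theta_eq (τ : Matrix (Fin g) (Fin g) ℂ) (a : Fin g → ℚ) (z : Fin g → ℂ) :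
    theta g τ a 0 z = ∑' n : Fin g → ℤ, E τ a z n := by
  simp only [theta, E, Pi.zero_apply, Rat.cast_zero, add_zero]

lemma im_dot (x : Fin g → ℝ) (w : Fin g → ℂ) :
    (dotProduct (fun i => (x i : ℂ)) w).im = dotProduct x (fun i => (w i).im) := by
  simp [dotProduct, Complex.im_sum, Complex.mul_im]

lemma im_quad (τ : Matrix (Fin g) (Fin g) ℂ) (x : Fin g → ℝ) :
    (dotProduct (fun i => (x i : ℂ)) (τ.mulVec fun i => (x i : ℂ))).im
      = dotProduct x ((τ.map Complex.im).mulVec x) := by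
  simp [dotProduct, Matrix.mulVec, Complex.im_sum, Complex.mul_im,
    Finset.mul_sum, Complex.re_sum]

lemma norm_exp_term (τ : Matrix (Fin g) (Fin g) ℂ) (x : Fin g → ℝ) (w : Fin g → ℂ) :
    ‖Complex.exp ((Real.pi:ℂ) * Complex.I *
        dotProduct (fun i => (x i:ℂ)) (τ.mulVec fun i => (x i:ℂ)) +
      2 * (Real.pi:ℂ) * Complex.I * dotProduct (fun i => (x i:ℂ)) w)‖
    = Real.exp (-Real.pi * dotProduct x ((τ.map Complex.im).mulVec x)
        - 2 * Real.pi * dotProduct x (fun i => (w i).im)) := by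
  rw [Complex.norm_exp]
  congr 1
  rw [Complex.add_re]
  have h1 : ∀ (Q : ℂ), ((Real.pi:ℂ) * Complex.I * Q).re = -Real.pi * Q.im := by
    intro Q; simp [Complex.mul_re, Complex.mul_im]
  have h2 : ∀ (Q : ℂ), (2 * (Real.pi:ℂ) * Complex.I * Q).re = -(2*Real.pi) * Q.im := by
    intro Q; simp [Complex.mul_re, Complex.mul_im]
  rw [h1, h2, im_quad, im_dot]
  ring

lemma norm_E (τ : Matrix (Fin g) (Fin g) ℂ) (a : Fin g → ℚ) (w : Fin g → ℂ) (n : Fin g → ℤ) :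
    ‖E τ a w n‖ = Real.exp
      (-Real.pi * dotProduct (fun i => (n i : ℝ) + (a i : ℝ))
          ((τ.map Complex.im).mulVec (fun i => (n i : ℝ) + (a i : ℝ)))
        - 2 * Real.pi * dotProduct (fun i => (n i : ℝ) + (a i : ℝ))
            (fun i => (w i).im)) := by
  have hx : (fun i => (n i : ℂ) + (a i : ℂ))
      = fun i => (((n i : ℝ) + (a i : ℝ) : ℝ) : ℂ) := by
    funext i; push_cast; ring
  rw [E, hx, norm_exp_term]

lemma exp_bound {Y : Matrix (Fin g) (Fin g) ℝ} {c : ℝ} (hc : 0 < c)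
    (hb : ∀ x : Fin g → ℝ, c * ∑ i, (x i)^2 ≤ dotProduct x (Y.mulVec x))
    {wim : Fin g → ℝ} {W : ℝ} (hWb : ∀ i, |wim i| ≤ W) (x : Fin g → ℝ) :
    -Real.pi * dotProduct x (Y.mulVec x) - 2 * Real.pi * dotProduct x wim
      ≤ ∑ i, (-(Real.pi*c) * (x i)^2 + (2*Real.pi*W) * |x i|) := by
  have hq : -Real.pi * dotProduct x (Y.mulVec x)
      ≤ ∑ i, (-(Real.pi*c)) * (x i)^2 := by
    rw [← Finset.mul_sum, show ∀ S:ℝ, -(Real.pi*c) * S = -Real.pi * (c * S) from fun S => by ring]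
    have := hb x
    nlinarith [Real.pi_pos]
  have hl : -(2 * Real.pi) * dotProduct x wim ≤ ∑ i, (2*Real.pi*W) * |x i| := by
    rw [dotProduct, Finset.mul_sum]
    apply Finset.sum_le_sum
    intro i _
    have h1 : -(x i * wim i) ≤ |x i| * |wim i| := by
      rw [← abs_mul]; exact neg_le_abs _
    have h2 : |x i| * |wim i| ≤ |x i| * W :=
      mul_le_mul_of_nonneg_left (hWb i) (abs_nonneg _)
    nlinarith [Real.pi_pos]
  calc -Real.pi * dotProduct x (Y.mulVec x) - 2 * Real.pi * dotProduct x wim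
      = -Real.pi * dotProduct x (Y.mulVec x)
        + (-(2 * Real.pi) * dotProduct x wim) := by ring
    _ ≤ (∑ i, (-(Real.pi*c)) * (x i)^2) + ∑ i, (2*Real.pi*W) * |x i| := add_le_add hq hl
    _ = ∑ i, (-(Real.pi*c) * (x i)^2 + (2*Real.pi*W) * |x i|) := by
        rw [Finset.sum_add_distrib]

lemma summable_norm_E (τ : Matrix (Fin g) (Fin g) ℂ)
    (hbb : ∃ c > 0, ∀ x : Fin g → ℝ,
      c * ∑ i, (x i)^2 ≤ dotProduct x ((τ.map Complex.im).mulVec x))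
    (a : Fin g → ℚ) (w : Fin g → ℂ) :
    Summable (fun n : Fin g → ℤ => ‖E τ a w n‖) := by
  obtain ⟨c, hc, hb⟩ := hbb
  set W : ℝ := ∑ j, |(w j).im| with hW
  have hWb : ∀ i, |(w i).im| ≤ W :=
    fun i => Finset.single_le_sum (f := fun j => |(w j).im|) (fun j _ => abs_nonneg _)
      (Finset.mem_univ i)
  have hGs : ∀ i : Fin g, Summable (fun k : ℤ =>
      Real.exp (-(Real.pi*c) * ((k:ℝ) + (a i : ℝ))^2 + (2*Real.pi*W) * |(k:ℝ) + (a i : ℝ)|)) :=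
    fun i => sum_1d _ _ _ (by positivity)
  refine Summable.of_nonneg_of_le (fun n => norm_nonneg _) (fun n => ?_)
    (sum_pi g (fun i k =>
      Real.exp (-(Real.pi*c) * ((k:ℝ) + (a i : ℝ))^2 + (2*Real.pi*W) * |(k:ℝ) + (a i : ℝ)|))
      (fun i k => Real.exp_nonneg _) hGs)
  rw [norm_E, ← Real.exp_sum]
  exact Real.exp_le_exp.mpr (exp_bound hc hb hWb _)

def Φ (g : ℕ) : ((Fin g → Bool) × ((Fin g → ℤ) × (Fin g → ℤ))) ≃ ((Fin g → ℤ) × (Fin g → ℤ)) where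
  toFun x := (fun i => x.2.1 i + x.2.2 i + (if x.1 i then 1 else 0),
              fun i => x.2.1 i - x.2.2 i)
  invFun p := (fun i => (p.1 i + p.2 i) % 2 == 1,
    (fun i => (p.1 i + p.2 i - (p.1 i + p.2 i) % 2) / 2,
     fun i => (p.1 i - p.2 i - (p.1 i + p.2 i) % 2) / 2))
  left_inv x := by
    obtain ⟨ε, m, k⟩ := x
    refine Prod.ext ?_ (Prod.ext ?_ ?_) <;> funext i <;> simp only <;>
      rcases Bool.eq_false_or_eq_true (ε i) with h | h <;> simp [h] <;> omega
  right_inv p := by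
    obtain ⟨n1, n2⟩ := p
    have hpar : ∀ i, (n1 i + n2 i) % 2 = 0 ∨ (n1 i + n2 i) % 2 = 1 :=
      fun i => Int.emod_two_eq_zero_or_one _
    refine Prod.ext ?_ ?_ <;> funext i <;> simp only <;> rcases hpar i with h | h <;>
      simp [h] <;> omega

lemma symdot {τ : Matrix (Fin g) (Fin g) ℂ} (hsymm : τ.IsSymm) (v w : Fin g → ℂ) :
    dotProduct v (τ.mulVec w) = dotProduct w (τ.mulVec v) := by
  rw [Matrix.dotProduct_mulVec, dotProduct_comm, ← Matrix.mulVec_transpose, hsymm.eq]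

lemma exp_arg_eq (τ : Matrix (Fin g) (Fin g) ℂ) (hsymm : τ.IsSymm) (z1 z2 v w : Fin g → ℂ) :
    ((Real.pi : ℂ) * Complex.I * dotProduct v ((2 • τ).mulVec v) +
      2 * (Real.pi : ℂ) * Complex.I * dotProduct v (fun i => 2 * z1 i)) +
    ((Real.pi : ℂ) * Complex.I * dotProduct w ((2 • τ).mulVec w) +
      2 * (Real.pi : ℂ) * Complex.I * dotProduct w (fun i => 2 * z2 i))
    = ((Real.pi : ℂ) * Complex.I * dotProduct (v + w) (τ.mulVec (v + w)) +
      2 * (Real.pi : ℂ) * Complex.I * dotProduct (v + w) (z1 + z2)) +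
    ((Real.pi : ℂ) * Complex.I * dotProduct (v - w) (τ.mulVec (v - w)) +
      2 * (Real.pi : ℂ) * Complex.I * dotProduct (v - w) (z1 - z2)) := by
  have h2 : ∀ u : Fin g → ℂ, (2 • τ).mulVec u = τ.mulVec u + τ.mulVec u := by
    intro u; rw [two_smul, Matrix.add_mulVec]
  have hz : ∀ (z u : Fin g → ℂ), dotProduct u (fun i => 2 * z i)
      = 2 * dotProduct u z := by
    intro z u
    simp [dotProduct, Finset.mul_sum]; congr 1; funext i; ring
  simp only [h2, hz, Matrix.mulVec_add, Matrix.mulVec_sub, dotProduct_add,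
    dotProduct_sub, add_dotProduct, sub_dotProduct]
  rw [symdot hsymm w v]
  ring

lemma key (τ : Matrix (Fin g) (Fin g) ℂ) (hsymm : τ.IsSymm) (z1 z2 : Fin g → ℂ)
    (ε : Fin g → Bool) (m k : Fin g → ℤ) :
    E (2 • τ) (fun i => if ε i then (1/2 : ℚ) else 0) (fun i => 2 * z1 i) m *
      E (2 • τ) (fun i => if ε i then (1/2 : ℚ) else 0) (fun i => 2 * z2 i) k
    = E τ 0 (z1 + z2) (fun i => m i + k i + (if ε i then 1 else 0)) *
      E τ 0 (z1 - z2) (fun i => m i - k i) := by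
  set v : Fin g → ℂ := fun i => (m i : ℂ) + (if ε i then (1/2 : ℂ) else 0) with hv
  set w : Fin g → ℂ := fun i => (k i : ℂ) + (if ε i then (1/2 : ℂ) else 0) with hw
  have hcv : (fun i => ((m i : ℂ)) + (((if ε i then (1/2:ℚ) else 0) : ℚ) : ℂ)) = v := by
    funext i; rcases Bool.eq_false_or_eq_true (ε i) with h | h <;> simp [hv, h]
  have hcw : (fun i => ((k i : ℂ)) + (((if ε i then (1/2:ℚ) else 0) : ℚ) : ℂ)) = w := by
    funext i; rcases Bool.eq_false_or_eq_true (ε i) with h | h <;> simp [hw, h]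
  have hn1 : (fun i => ((m i + k i + (if ε i then 1 else 0) : ℤ) : ℂ)
      + (((0 : Fin g → ℚ) i : ℚ) : ℂ)) = v + w := by
    funext i
    rcases Bool.eq_false_or_eq_true (ε i) with h | h <;>
      simp [hv, hw, h, Pi.add_apply] <;> push_cast <;> ring
  have hn2 : (fun i => ((m i - k i : ℤ) : ℂ) + (((0 : Fin g → ℚ) i : ℚ) : ℂ)) = v - w := by
    funext i
    simp only [hv, hw, Pi.sub_apply, Pi.zero_apply]
    push_cast; ring
  simp only [E]
  rw [← Complex.exp_add, ← Complex.exp_add, hcv, hcw, hn1, hn2]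
  exact congrArg Complex.exp (exp_arg_eq τ hsymm z1 z2 v w)

end RT

/-- The Riemann theta relation:
`θ[0,0](z1+z2, τ)·θ[0,0](z1−z2, τ) = Σ_{a ∈ {0,1/2}^g} θ[a,0](2z1, 2τ)·θ[a,0](2z2, 2τ)`,
where the sum runs over all `2^g` vectors `a` with entries in `{0, 1/2}`
(indexed here by functions `ε : Fin g → Bool`). -/
theorem riemann_theta_relation (g : ℕ) (hg : 1 ≤ g)
    (τ : Matrix (Fin g) (Fin g) ℂ) (hsymm : τ.IsSymm)
    (hpos : (τ.map Complex.im).PosDef)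
    (z1 z2 : Fin g → ℂ) :
    theta g τ 0 0 (z1 + z2) * theta g τ 0 0 (z1 - z2) =
      ∑ ε : Fin g → Bool,
        theta g (2 • τ) (fun i => if ε i then (1/2 : ℚ) else 0) 0 (fun i => 2 * z1 i) *
          theta g (2 • τ) (fun i => if ε i then (1/2 : ℚ) else 0) 0 (fun i => 2 * z2 i) := by
  classical
  obtain ⟨c, hc, hb⟩ := RT.posdef_bound (τ.map Complex.im) hpos
  have hbb : ∃ c > 0, ∀ x : Fin g → ℝ,
      c * ∑ i, (x i)^2 ≤ dotProduct x ((τ.map Complex.im).mulVec x) := ⟨c, hc, hb⟩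
  have hmap : ((2 • τ).map Complex.im) = 2 • (τ.map Complex.im) := by
    ext i j
    simp [Matrix.map_apply, two_smul]
  have hbb2 : ∃ c > 0, ∀ x : Fin g → ℝ,
      c * ∑ i, (x i)^2 ≤ dotProduct x (((2 • τ).map Complex.im).mulVec x) := by
    refine ⟨2*c, by positivity, fun x => ?_⟩
    have h1 := hb x
    rw [hmap, two_smul, Matrix.add_mulVec, dotProduct_add]
    linarith
  -- summabilities
  have S1 : Summable (fun n : Fin g → ℤ => ‖RT.E τ 0 (z1 + z2) n‖) :=
    RT.summable_norm_E τ hbb 0 (z1 + z2)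
  have S2 : Summable (fun n : Fin g → ℤ => ‖RT.E τ 0 (z1 - z2) n‖) :=
    RT.summable_norm_E τ hbb 0 (z1 - z2)
  set H : ((Fin g → ℤ) × (Fin g → ℤ)) → ℂ :=
    fun p => RT.E τ 0 (z1 + z2) p.1 * RT.E τ 0 (z1 - z2) p.2 with hH
  have HS : Summable H := summable_mul_of_summable_norm S1 S2
  have HΦS : Summable (H ∘ RT.Φ g) := ((RT.Φ g).summable_iff).mpr HS
  -- LHS
  have hLHS : theta g τ 0 0 (z1 + z2) * theta g τ 0 0 (z1 - z2) = ∑' p, H p := by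
    rw [RT.theta_eq, RT.theta_eq, hH]
    exact tsum_mul_tsum_of_summable_norm S1 S2
  -- RHS
  have hRHS : ∀ ε : Fin g → Bool,
      theta g (2 • τ) (fun i => if ε i then (1/2 : ℚ) else 0) 0 (fun i => 2 * z1 i) *
        theta g (2 • τ) (fun i => if ε i then (1/2 : ℚ) else 0) 0 (fun i => 2 * z2 i)
      = ∑' p : (Fin g → ℤ) × (Fin g → ℤ), H (RT.Φ g (ε, p)) := by
    intro ε
    rw [RT.theta_eq, RT.theta_eq]
    rw [tsum_mul_tsum_of_summable_norm
      (RT.summable_norm_E (2 • τ) hbb2 _ _) (RT.summable_norm_E (2 • τ) hbb2 _ _)]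
    congr 1
    funext p
    rw [hH]
    exact RT.key τ hsymm z1 z2 ε p.1 p.2
  calc theta g τ 0 0 (z1 + z2) * theta g τ 0 0 (z1 - z2) = ∑' p, H p := hLHS
    _ = ∑' x : (Fin g → Bool) × ((Fin g → ℤ) × (Fin g → ℤ)), H (RT.Φ g x) :=
        ((RT.Φ g).tsum_eq H).symm
    _ = ∑' ε : Fin g → Bool, ∑' p : (Fin g → ℤ) × (Fin g → ℤ), H (RT.Φ g (ε, p)) :=
        HΦS.tsum_prod
    _ = ∑ ε : Fin g → Bool, ∑' p : (Fin g → ℤ) × (Fin g → ℤ), H (RT.Φ g (ε, p)) :=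
        tsum_fintype _
    _ = ∑ ε : Fin g → Bool,
        theta g (2 • τ) (fun i => if ε i then (1/2 : ℚ) else 0) 0 (fun i => 2 * z1 i) *
          theta g (2 • τ) (fun i => if ε i then (1/2 : ℚ) else 0) 0 (fun i => 2 * z2 i) := by
        refine Finset.sum_congr rfl (fun ε _ => ?_)
        rw [hRHS ε]
end

section
/- Let k be a field of characteristic ≠ 2 and let λ1', λ2', λ3' ∈ k satisfy λ2' ≠ λ3', λ1' ≠ λ2', λ1' ≠ λ3', λ1' ≠ 2 and λ1' ≠ −2. Define Λ1' = 2(2λ1' − λ2' − λ3')/(λ2' − λ3'), Λ2' = Λ1' − 4(λ1' − λ2')(λ1' − λ3')/((λ1' + 2)(λ2' − λ3')), and Λ3' = Λ1' − 4(λ1' − λ2')(λ1' − λ3')/((λ1' − 2)(λ2' − λ3')). Then Λ2' ≠ Λ3', Λ1' ≠ 2, Λ1' ≠ −2, and the inverse relations hold: λ1' = 2(2Λ1' − Λ2' − Λ3')/(Λ2' − Λ3'), λ2' − λ1' = −4(Λ1' − Λ2')(Λ1' − Λ3')/((Λ1' + 2)(Λ2' − Λ3')), and λ3' − λ1' = −4(Λ1'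 − Λ2')(Λ1' − Λ3')/((Λ1' − 2)(Λ2' − Λ3')). -/
/-- Symmetric relations between the rescaled Rosenhain moduli `λ1', λ2', λ3'` of a
genus-two curve and the rescaled moduli `Λ1', Λ2', Λ3'` of its (2,2)-isogenous curve
(Richelot isogeny), as a purely algebraic identity over a field of characteristic ≠ 2. -/
theorem richelot_moduli_relations {k : Type*} [Field k] (hchar : (2 : k) ≠ 0)
    (l1 l2 l3 : k)
    (h23 : l2 ≠ l3) (h12 : l1 ≠ l2) (h13 : l1 ≠ l3)
    (hp : l1 ≠ 2) (hm : l1 ≠ -2)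
    (L1 L2 L3 : k)
    (hL1 : L1 = 2 * (2*l1 - l2 - l3) / (l2 - l3))
    (hL2 : L2 = L1 - 4 * (l1 - l2) * (l1 - l3) / ((l1 + 2) * (l2 - l3)))
    (hL3 : L3 = L1 - 4 * (l1 - l2) * (l1 - l3) / ((l1 - 2) * (l2 - l3))) :
    L2 ≠ L3 ∧ L1 ≠ 2 ∧ L1 ≠ -2 ∧
    l1 = 2 * (2*L1 - L2 - L3) / (L2 - L3) ∧
    l2 - l1 = -(4 * (L1 - L2) * (L1 - L3)) / ((L1 + 2) * (L2 - L3)) ∧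
    l3 - l1 = -(4 * (L1 - L2) * (L1 - L3)) / ((L1 - 2) * (L2 - L3)) := by
  have hd : l2 - l3 ≠ 0 := sub_ne_zero.mpr h23
  have h12' : l1 - l2 ≠ 0 := sub_ne_zero.mpr h12
  have h13' : l1 - l3 ≠ 0 := sub_ne_zero.mpr h13
  have hp' : l1 - 2 ≠ 0 := sub_ne_zero.mpr hp
  have hm' : l1 + 2 ≠ 0 := by
    intro h; exact hm (by linear_combination h)
  have h4 : (4 : k) ≠ 0 := by
    have h22 := mul_ne_zero hchar hchar
    intro h; exact h22 (by linear_combination h)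
  have h16 : (16 : k) ≠ 0 := by
    have := mul_ne_zero h4 h4
    intro h; exact this (by linear_combination h)
  -- cleared-denominator forms of the hypotheses
  have hL1' : L1 * (l2 - l3) = 2 * (2*l1 - l2 - l3) := by
    rw [hL1]; field_simp
  have hL2' : (L1 - L2) * ((l1 + 2) * (l2 - l3)) = 4 * (l1 - l2) * (l1 - l3) := by
    rw [hL2]; field_simp; ring
  have hL3' : (L1 - L3) * ((l1 - 2) * (l2 - l3)) = 4 * (l1 - l2) * (l1 - l3) := by
    rw [hL3]; field_simp; ring
  have eM' : (L1 - 2) * (l2 - l3) = 4 * (l1 - l2) := by linear_combination hL1'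
  have eP' : (L1 + 2) * (l2 - l3) = 4 * (l1 - l3) := by linear_combination hL1'
  have e23' : (L2 - L3) * ((l2 - l3) * (l1 + 2) * (l1 - 2)) =
      16 * (l1 - l2) * (l1 - l3) := by
    linear_combination (l1 + 2) * hL3' - (l1 - 2) * hL2'
  have hW : (l2 - l3) * (l1 + 2) * (l1 - 2) ≠ 0 :=
    mul_ne_zero (mul_ne_zero hd hm') hp'
  have h23' : L2 - L3 ≠ 0 := by
    intro h
    exact (mul_ne_zero (mul_ne_zero h16 h12') h13') (by linear_combination -e23' + ((l2 - l3) * (l1 + 2) * (l1 - 2)) * h)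
  have hM2 : L1 - 2 ≠ 0 := by
    intro h
    exact (mul_ne_zero h4 h12') (by linear_combination (l2 - l3) * h - eM')
  have hP2 : L1 + 2 ≠ 0 := by
    intro h
    exact (mul_ne_zero h4 h13') (by linear_combination (l2 - l3) * h - eP')
  refine ⟨sub_ne_zero.mp h23', sub_ne_zero.mp hM2, ?_, ?_, ?_, ?_⟩
  · intro h; exact hP2 (by linear_combination h)
  · rw [eq_div_iff h23']
    have key : l1 * (L2 - L3) * ((l2 - l3) * (l1 + 2) * (l1 - 2)) =
        2 * (2*L1 - L2 - L3) * ((l2 - l3) * (l1 + 2) * (l1 - 2)) := by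
      linear_combination (l1 * (l1 + 2) - 2 * (l1 + 2)) * hL3' +
        (-(l1 * (l1 - 2)) - 2 * (l1 - 2)) * hL2'
    exact mul_right_cancel₀ hW key
  · rw [eq_div_iff (mul_ne_zero hP2 h23')]
    have key2 : (l2 - l1) * ((L1 + 2) * (L2 - L3)) * ((l2 - l3)^2 * (l1 + 2) * (l1 - 2)) =
        -(4 * (L1 - L2) * (L1 - L3)) * ((l2 - l3)^2 * (l1 + 2) * (l1 - 2)) := by
      linear_combination (-(l1 - l2) * (L2 - L3) * (l2 - l3) * (l1 + 2) * (l1 - 2)) * eP' +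
        (-4 * (l1 - l2) * (l1 - l3)) * e23' +
        (4 * (L1 - L3) * (l1 - 2) * (l2 - l3)) * hL2' +
        (16 * (l1 - l2) * (l1 - l3)) * hL3'
    exact mul_right_cancel₀ (mul_ne_zero (mul_ne_zero (pow_ne_zero 2 hd) hm') hp') key2
  · rw [eq_div_iff (mul_ne_zero hM2 h23')]
    have key2 : (l3 - l1) * ((L1 - 2) * (L2 - L3)) * ((l2 - l3)^2 * (l1 + 2) * (l1 - 2)) =
        -(4 * (L1 - L2) * (L1 - L3)) * ((l2 - l3)^2 * (l1 + 2) * (l1 - 2)) := by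
      linear_combination (-(l1 - l3) * (L2 - L3) * (l2 - l3) * (l1 + 2) * (l1 - 2)) * eM' +
        (-4 * (l1 - l2) * (l1 - l3)) * e23' +
        (4 * (L1 - L3) * (l1 - 2) * (l2 - l3)) * hL2' +
        (16 * (l1 - l2) * (l1 - l3)) * hL3'
    exact mul_right_cancel₀ (mul_ne_zero (mul_ne_zero (pow_ne_zero 2 hd) hm') hp') key2
end

section
/- Let k be a field and λ1, λ2, λ3 ∈ k. Suppose t1, t2, t3, t4, t5, t6 ∈ k satisfy the three quadric equations t1² = (1−λ1)t4² + λ1·t5² + λ1(λ1−1)t6², t2² = (1−λ2)t4² + λ2·t5² + λ2(λ2−1)t6², t3² = (1−λ3)t4² + λ3·t5² + λ3(λ3−1)t6². Set z1 = t6², z2 = t4² + t6² − t5², z3 = t4², and z̃4 = t1·t2·t3·t4·t5·t6. Then z̃4² = z1·z3·(z1 − z2 + z3)·∏_{i=1}^{3} (λi²·z1 − λi·z2 + z3); that is, the point (z1, z2, z3, z̃4) lies on the Shioda sextic associated with the genus-two curve y² = xz(x−z)(x−λ1 z)(x−λ2 z)(x−λ3 z). -/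
/-- A point on the complete intersection of the three Kummer quadrics in `P⁵`
maps to a point of the Shioda sextic associated with the genus-two curve
`y² = xz(x−z)(x−lam1 z)(x−lam2 z)(x−lam3 z)`. -/
theorem kummer_quadrics_to_shioda_sextic {k : Type*} [Field k]
    (lam1 lam2 lam3 : k) (t1 t2 t3 t4 t5 t6 : k)
    (hq1 : t1^2 = (1 - lam1) * t4^2 + lam1 * t5^2 + lam1 * (lam1 - 1) * t6^2)
    (hq2 : t2^2 = (1 - lam2) * t4^2 + lam2 * t5^2 + lam2 * (lam2 - 1) * t6^2)
    (hq3 : t3^2 = (1 - lam3) * t4^2 + lam3 * t5^2 + lam3 * (lam3 - 1) * t6^2)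
    (z1 z2 z3 z4 : k)
    (hz1 : z1 = t6^2) (hz2 : z2 = t4^2 + t6^2 - t5^2) (hz3 : z3 = t4^2)
    (hz4 : z4 = t1 * t2 * t3 * t4 * t5 * t6) :
    z4^2 = z1 * z3 * (z1 - z2 + z3) *
      ((lam1^2 * z1 - lam1 * z2 + z3) * (lam2^2 * z1 - lam2 * z2 + z3) *
        (lam3^2 * z1 - lam3 * z2 + z3)) := by
  subst hz1 hz2 hz3 hz4
  linear_combination
    ((t4*t5*t6)^2 * t2^2 * t3^2) * hq1 +
    ((t4*t5*t6)^2 * ((1 - lam1) * t4^2 + lam1 * t5^2 + lam1 * (lam1 - 1) * t6^2) * t3^2) * hq2 +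
    ((t4*t5*t6)^2 * ((1 - lam1) * t4^2 + lam1 * t5^2 + lam1 * (lam1 - 1) * t6^2) *
      ((1 - lam2) * t4^2 + lam2 * t5^2 + lam2 * (lam2 - 1) * t6^2)) * hq3
end

section
/- Let k be a field with char k ≠ 2 and let s1, s2 ∈ k be such that D := 4(s1³ + s2³) − s1²s2² − 18·s1·s2 + 27 ≠ 0. Then the Weierstrass curve E1 : y² = x³ + s2·x² + s1·x + 1 has nonzero discriminant and its j-invariant equals 256·(3s1 − s2²)³ / D, and the Weierstrass curve E2 : y² = x³ + s1·x² + s2·x + 1 has nonzero discriminant and its j-invariant equals 256·(3s2 − s1²)³ / D. -/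
/-- Bolza's two elliptic quotients: the curves `E1 : y² = x³ + s2x² + s1x + 1` and
`E2 : y² = x³ + s1x² + s2x + 1` have nonzero discriminants and j-invariants
`256(3s1 − s2²)³/D` and `256(3s2 − s1²)³/D` with
`D = 4(s1³+s2³) − s1²s2² − 18s1s2 + 27`, where the j-invariant of a Weierstrass
curve with nonzero discriminant is `c₄³/Δ`. -/
theorem bolza_elliptic_quotients_j_invariants {k : Type*} [Field k]
    (hchar : (2 : k) ≠ 0) (s1 s2 : k)
    (hD : 4 * (s1^3 + s2^3) - s1^2 * s2^2 - 18 * s1 * s2 + 27 ≠ 0)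
    (E1 E2 : WeierstrassCurve k)
    (hE1 : E1 = { a₁ := 0, a₂ := s2, a₃ := 0, a₄ := s1, a₆ := 1 })
    (hE2 : E2 = { a₁ := 0, a₂ := s1, a₃ := 0, a₄ := s2, a₆ := 1 }) :
    E1.Δ ≠ 0 ∧
    E1.c₄^3 / E1.Δ =
      256 * (3 * s1 - s2^2)^3 / (4 * (s1^3 + s2^3) - s1^2 * s2^2 - 18 * s1 * s2 + 27) ∧
    E2.Δ ≠ 0 ∧
    E2.c₄^3 / E2.Δ =
      256 * (3 * s2 - s1^2)^3 / (4 * (s1^3 + s2^3) - s1^2 * s2^2 - 18 * s1 * s2 + 27) := by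
  have h16 : (16 : k) ≠ 0 := by
    have : (16 : k) = 2^4 := by norm_num
    rw [this]; exact pow_ne_zero _ hchar
  have hΔ1 : E1.Δ = -16 * (4 * (s1^3 + s2^3) - s1^2 * s2^2 - 18 * s1 * s2 + 27) := by
    subst hE1
    simp only [WeierstrassCurve.Δ, WeierstrassCurve.b₂, WeierstrassCurve.b₄,
      WeierstrassCurve.b₆, WeierstrassCurve.b₈]
    ring
  have hΔ2 : E2.Δ = -16 * (4 * (s1^3 + s2^3) - s1^2 * s2^2 - 18 * s1 * s2 + 27) := by
    subst hE2
    simp only [WeierstrassCurve.Δ, WeierstrassCurve.b₂, WeierstrassCurve.b₄,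
      WeierstrassCurve.b₆, WeierstrassCurve.b₈]
    ring
  have hc1 : E1.c₄ = -16 * (3 * s1 - s2^2) := by
    subst hE1
    simp only [WeierstrassCurve.c₄, WeierstrassCurve.b₂, WeierstrassCurve.b₄]
    ring
  have hc2 : E2.c₄ = -16 * (3 * s2 - s1^2) := by
    subst hE2
    simp only [WeierstrassCurve.c₄, WeierstrassCurve.b₂, WeierstrassCurve.b₄]
    ring
  have hne : (-16 : k) * (4 * (s1^3 + s2^3) - s1^2 * s2^2 - 18 * s1 * s2 + 27) ≠ 0 := by
    refine mul_ne_zero (by simpa using neg_ne_zero.mpr h16) hD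
  refine ⟨hΔ1 ▸ hne, ?_, hΔ2 ▸ hne, ?_⟩
  · rw [hΔ1, hc1, div_eq_div_iff hne hD]; ring
  · rw [hΔ2, hc2, div_eq_div_iff hne hD]; ring
end

section
/- Let k be a field and Λ ∈ k. (a) If x, y, z ∈ k satisfy y²z = x(x − z)(x − Λz), then X00 = x² − 2Λxz + Λz², X01 = x² − Λz², X10 = x² − 2xz + Λz², X11 = 2yz satisfy the two quadric equations X01² = X10² + X11² and X00² = X10² + (1 − Λ)·X11². (b) Conversely, if X00, X01, X10, X11 ∈ k satisfy X01² = X10² + X11² and X00² = X10² + (1 − Λ)·X11², then x = Λ(X10 − X00), y = Λ(Λ − 1)·X11, z = (1 − Λ)·X01 + Λ·X10 − X00 satisfy y²z = x(x − z)(x − Λz). -/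
/-- The Legendre elliptic curve `y²z = x(x−z)(x−Λz)` is equivalent to the complete
intersection of the two quadrics `X01² = X10² + X11²` and
`X00² = X10² + (1−Λ)X11²`, via the displayed mutually inverse rational maps. -/
theorem legendre_curve_quadric_intersection {k : Type*} [Field k] (Λ : k) :
    -- (a) forward map: from the Legendre curve to the intersection of quadrics
    (∀ x y z : k, y^2 * z = x * (x - z) * (x - Λ * z) →
      (x^2 - Λ * z^2)^2 = (x^2 - 2*x*z + Λ * z^2)^2 + (2*y*z)^2 ∧
      (x^2 - 2*Λ*x*z + Λ * z^2)^2 = (x^2 - 2*x*z + Λ * z^2)^2 + (1 - Λ) * (2*y*z)^2) ∧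
    -- (b) inverse map: from the intersection of quadrics to the Legendre curve
    (∀ X00 X01 X10 X11 : k,
      X01^2 = X10^2 + X11^2 → X00^2 = X10^2 + (1 - Λ) * X11^2 →
      (Λ * (Λ - 1) * X11)^2 * ((1 - Λ) * X01 + Λ * X10 - X00) =
        (Λ * (X10 - X00)) *
          (Λ * (X10 - X00) - ((1 - Λ) * X01 + Λ * X10 - X00)) *
          (Λ * (X10 - X00) - Λ * ((1 - Λ) * X01 + Λ * X10 - X00))) := by
  constructor
  · intro x y z h
    constructor
    · linear_combination (-4*z) * h
    · linear_combination (4*(Λ-1)*z) * h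
  · intro X00 X01 X10 X11 h1 h2
    linear_combination (Λ^2*(1-Λ)^2*(X00 - X10)) * h1 + (Λ^2*(1-Λ)^2*(X10 - X01)) * h2
end
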